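/- Let g : [0,T] → ℝ be continuous and define v(t) = sup_{τ ∈ [t,T]} ( ∫_t^τ ψ(s)ds + g(τ)·1_{τ<T} ) where ψ : [0,T] → ℝ is continuous and g(T⁻)·1 is replaced by 0 at τ = T. If g(T) < 0 (i.e., the obstacle jumps upward at T since it is replaced by 0), then v is continuous on [0,T] and v(T) = 0. -/

import Mathlib

open Set intervalIntegral

/-- Continuity of the running supremum from the right of a continuous function. -/
lemma contS_aux (T : ℝ) (G : ℝ → ℝ) (hG : ContinuousOn G (Icc 0 T)) :
    ContinuousOn (fun t => sSup (G '' Icc t T)) (Icc 0 T) := by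
  have hu := isCompact_Icc.uniformContinuousOn_of_continuous hG
  rw [Metric.uniformContinuousOn_iff] at hu
  rw [Metric.continuousOn_iff]
  intro b hb ε hε
  obtain ⟨δ, hδ, hδ'⟩ := hu (ε / 2) (by linarith)
  have hbdd : ∀ x ∈ Icc (0:ℝ) T, BddAbove (G '' Icc x T) := fun x hx =>
    isCompact_Icc.bddAbove_image (hG.mono (Icc_subset_Icc hx.1 le_rfl))
  have hne : ∀ x ∈ Icc (0:ℝ) T, (G '' Icc x T).Nonempty := fun x hx =>
    (nonempty_Icc.mpr hx.2).image G
  have hmono : ∀ x ∈ Icc (0:ℝ) T, ∀ y ∈ Icc (0:ℝ) T, x ≤ y →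
      sSup (G '' Icc y T) ≤ sSup (G '' Icc x T) := by
    intro x hx y hy hxy
    exact csSup_le_csSup (hbdd x hx) (hne y hy) (image_mono (f := G) (Icc_subset_Icc hxy le_rfl))
  have key : ∀ x ∈ Icc (0:ℝ) T, ∀ y ∈ Icc (0:ℝ) T, x ≤ y → dist x y < δ →
      sSup (G '' Icc x T) ≤ sSup (G '' Icc y T) + ε / 2 := by
    intro x hx y hy hxy hd
    apply csSup_le (hne x hx)
    rintro z ⟨τ, hτ, rfl⟩
    by_cases hτy : y ≤ τ
    · have : G τ ≤ sSup (G '' Icc y T) := le_csSup (hbdd y hy) ⟨τ, ⟨hτy, hτ.2⟩, rfl⟩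
      linarith
    · push_neg at hτy
      have hτ' : τ ∈ Icc (0:ℝ) T := ⟨le_trans hx.1 hτ.1, hτ.2⟩
      have hd2 : dist τ y < δ := by
        rw [Real.dist_eq] at hd ⊢
        rw [abs_of_nonpos (by linarith)] at hd ⊢
        linarith [hτ.1]
      have h1 := hδ' τ hτ' y hy hd2
      rw [Real.dist_eq] at h1
      have h2 := abs_lt.mp h1
      have hGy : G y ≤ sSup (G '' Icc y T) := le_csSup (hbdd y hy) ⟨y, ⟨le_rfl, hy.2⟩, rfl⟩
      linarith [h2.2]
  refine ⟨δ, hδ, ?_⟩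
  intro a ha hab
  rw [Real.dist_eq, abs_lt]
  rcases le_total a b with h | h
  · have h1 := hmono a ha b hb h
    have h2 := key a ha b hb h hab
    constructor <;> linarith
  · have h1 := hmono b hb a ha h
    have hab' : dist b a < δ := by rwa [dist_comm]
    have h2 := key b hb a ha h hab'
    constructor <;> linarith

theorem stmt11 (T : ℝ) (hT : 0 < T) (ψ g : ℝ → ℝ)
    (hψ : ContinuousOn ψ (Icc 0 T)) (hg : ContinuousOn g (Icc 0 T)) (hgT : g T < 0)
    (v : ℝ → ℝ)
    (hv : ∀ t ∈ Icc (0:ℝ) T, v t =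
      sSup ((fun τ => (∫ s in t..τ, ψ s) + (if τ < T then g τ else 0)) '' Icc t T)) :
    ContinuousOn v (Icc 0 T) ∧ v T = 0 := by
  set F : ℝ → ℝ := fun t => ∫ s in (0:ℝ)..t, ψ s with hF
  have hInt : IntervalIntegrable ψ MeasureTheory.volume 0 T := by
    apply ContinuousOn.intervalIntegrable
    rwa [uIcc_of_le hT.le]
  have hFc : ContinuousOn F (Icc 0 T) := by
    have h1 : MeasureTheory.IntegrableOn ψ (uIcc 0 T) MeasureTheory.volume := by
      rw [uIcc_of_le hT.le]
      exact hψ.integrableOn_Icc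
    have h2 := intervalIntegral.continuousOn_primitive_interval h1
    rwa [uIcc_of_le hT.le] at h2
  have hsplit : ∀ t ∈ Icc (0:ℝ) T, ∀ τ ∈ Icc (0:ℝ) T,
      (∫ s in t..τ, ψ s) = F τ - F t := by
    intro t ht τ hτ
    have h1 : IntervalIntegrable ψ MeasureTheory.volume 0 t := by
      apply hInt.mono_set
      exact uIcc_subset_uIcc (by rw [uIcc_of_le hT.le]; exact ⟨le_rfl, hT.le⟩)
        (by rw [uIcc_of_le hT.le]; exact ht)
    have h2 : IntervalIntegrable ψ MeasureTheory.volume t τ := by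
      apply hInt.mono_set
      exact uIcc_subset_uIcc (by rw [uIcc_of_le hT.le]; exact ht)
        (by rw [uIcc_of_le hT.le]; exact hτ)
    have := intervalIntegral.integral_add_adjacent_intervals h1 h2
    simp only [hF]
    linarith [this]
  set G₁ : ℝ → ℝ := fun τ => F τ + g τ with hG₁
  have hG₁c : ContinuousOn G₁ (Icc 0 T) := hFc.add hg
  set S : ℝ → ℝ := fun t => sSup (G₁ '' Icc t T) with hS
  have hbddS : ∀ t ∈ Icc (0:ℝ) T, BddAbove (G₁ '' Icc t T) := fun t ht =>
    isCompact_Icc.bddAbove_image (hG₁c.mono (Icc_subset_Icc ht.1 le_rfl))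
  have key : ∀ t ∈ Icc (0:ℝ) T, v t = max (S t) (F T) - F t := by
    intro t ht
    rw [hv t ht]
    set A := (fun τ => (∫ s in t..τ, ψ s) + (if τ < T then g τ else 0)) '' Icc t T with hA
    have hTmem : T ∈ Icc t T := ⟨ht.2, le_rfl⟩
    have hub : ∀ x ∈ A, x ≤ max (S t) (F T) - F t := by
      rintro x ⟨τ, hτ, rfl⟩
      have hτ' : τ ∈ Icc (0:ℝ) T := ⟨le_trans ht.1 hτ.1, hτ.2⟩
      beta_reduce
      rw [hsplit t ht τ hτ']
      by_cases h : τ < T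
      · have hG : G₁ τ ≤ S t := le_csSup (hbddS t ht) ⟨τ, hτ, rfl⟩
        have := le_max_left (S t) (F T)
        simp only [if_pos h, hG₁] at *
        linarith
      · have hτT : τ = T := le_antisymm hτ.2 (not_lt.mp h)
        have := le_max_right (S t) (F T)
        simp only [hτT, lt_irrefl, if_false]
        linarith
    have hFTA : F T - F t ∈ A := by
      refine ⟨T, hTmem, ?_⟩
      beta_reduce
      rw [hsplit t ht T ⟨hT.le, le_rfl⟩]
      simp
    have hbddA : BddAbove A := ⟨max (S t) (F T) - F t, hub⟩
    have hneA : A.Nonempty := ⟨F T - F t, hFTA⟩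
    apply le_antisymm
    · exact csSup_le hneA hub
    · have h1 : F T - F t ≤ sSup A := le_csSup hbddA hFTA
      have h2 : S t ≤ sSup A + F t := by
        apply csSup_le ((nonempty_Icc.mpr ht.2).image G₁)
        rintro z ⟨τ, hτ, rfl⟩
        have hτ' : τ ∈ Icc (0:ℝ) T := ⟨le_trans ht.1 hτ.1, hτ.2⟩
        by_cases h : τ < T
        · have hmem : G₁ τ - F t ∈ A := by
            refine ⟨τ, hτ, ?_⟩
            beta_reduce
            rw [hsplit t ht τ hτ', if_pos h]
            simp only [hG₁]
            ring
          have := le_csSup hbddA hmem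
          linarith
        · have hτT : τ = T := le_antisymm hτ.2 (not_lt.mp h)
          simp only [hG₁, hτT]
          linarith
      rw [sub_le_iff_le_add, max_le_iff]
      exact ⟨by linarith, by linarith⟩
  constructor
  · have hw : ContinuousOn (fun t => max (S t) (F T) - F t) (Icc 0 T) :=
      ((contS_aux T G₁ hG₁c).sup' continuousOn_const).sub hFc
    exact hw.congr key
  · have hvT := key T ⟨hT.le, le_rfl⟩
    have hST : S T = F T + g T := by
      simp only [hS, Icc_self, image_singleton, csSup_singleton, hG₁]
    rw [hvT, hST, max_eq_right (by linarith)]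
    ring
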